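/- Let 0 < r < 1 and let α : ℕ → ℝ be a strictly increasing sequence with α_n → ∞. Define w(n) := r^{α_n} for n ≥ 1. Then w is strictly decreasing and w(n) → 0 as n → ∞. Moreover, the sequence (n^k · r^{α_n})_{n≥1} is bounded for every k ∈ ℕ if and only if lim_{n→∞} (log n)/α_n = 0. -/

import Mathlib

open Filter Topology

noncomputable section

/-- for `0 < r < 1` and `α` strictly increasing with `α_n → ∞`, the
sequence `w(n) = r^{α_n}` is strictly decreasing and tends to `0`; moreover
`(n^k r^{α_n})_n` is bounded for every `k ∈ ℕ` iff `(log n)/α_n → 0`.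
(Indices are shifted: `n : Nat` represents `n+1`.) -/
theorem stmt0 (r : ℝ) (hr0 : 0 < r) (hr1 : r < 1) (a : ℕ → ℝ)
    (hmono : StrictMono a) (htop : Tendsto a atTop atTop) :
    StrictAnti (fun n : ℕ => r ^ (a n)) ∧
    Tendsto (fun n : ℕ => r ^ (a n)) atTop (𝓝 0) ∧
    ((∀ k : ℕ, ∃ M : ℝ, ∀ n : ℕ, ((n : ℝ) + 1) ^ k * r ^ (a n) ≤ M) ↔
      Tendsto (fun n : ℕ => Real.log ((n : ℝ) + 1) / a n) atTop (𝓝 0)) := by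
  have hlr : Real.log r < 0 := Real.log_neg hr0 hr1
  refine ⟨fun m n h => Real.rpow_lt_rpow_of_exponent_gt hr0 hr1 (hmono h),
    (tendsto_rpow_atTop_of_base_lt_one r (by linarith) hr1).comp htop, ?_, ?_⟩
  · -- forward
    intro hb
    rw [Metric.tendsto_atTop]
    intro ε hε
    set δ : ℝ := ε / 2 with hδ
    have hδ0 : 0 < δ := by positivity
    set k : ℕ := ⌈2 * (-Real.log r) / δ⌉₊ + 1 with hk
    have hk0 : (0:ℝ) < k := by positivity
    have hkb : -Real.log r / k ≤ δ / 2 := by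
      rw [div_le_iff₀ hk0]
      have h1 : 2 * (-Real.log r) / δ ≤ (k:ℝ) := by
        calc 2 * (-Real.log r) / δ ≤ ⌈2 * (-Real.log r) / δ⌉₊ := Nat.le_ceil _
        _ ≤ (k:ℝ) := by push_cast [hk]; linarith
      calc -Real.log r = δ / 2 * (2 * (-Real.log r) / δ) := by field_simp
      _ ≤ δ / 2 * k := by
          apply mul_le_mul_of_nonneg_left h1 (by positivity)
    obtain ⟨M, hM⟩ := hb k
    have hM0 : 0 < M := lt_of_lt_of_le (by positivity) (hM 0)
    have hC : ∃ N : ℕ, ∀ n ≥ N, a n ≥ max 1 (2 * |Real.log M| / (k * δ)) :=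
      eventually_atTop.1 (htop.eventually_ge_atTop _)
    obtain ⟨N, hN⟩ := hC
    refine ⟨N, fun n hn => ?_⟩
    have han := hN n hn
    have ha1 : (1:ℝ) ≤ a n := le_trans (le_max_left _ _) han
    have ha0 : 0 < a n := by linarith
    -- take log of the bound
    have hp : (0:ℝ) < ((n:ℝ)+1)^k * r ^ (a n) := by positivity
    have hlog : (k:ℝ) * Real.log ((n:ℝ)+1) + a n * Real.log r ≤ Real.log M := by
      have := Real.log_le_log hp (hM n)
      rwa [Real.log_mul (by positivity) (by positivity), Real.log_pow,
        Real.log_rpow hr0] at this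
    have hln : 0 ≤ Real.log ((n:ℝ)+1) := Real.log_nonneg (by linarith [(Nat.cast_nonneg n : (0:ℝ) ≤ n)])
    have key : Real.log ((n:ℝ)+1) / a n ≤ |Real.log M| / (k * a n) + (-Real.log r) / k := by
      rw [div_add_div _ _ (by positivity) (by positivity), div_le_div_iff₀ ha0 (by positivity)]
      have h2 : (k:ℝ) * Real.log ((n:ℝ)+1) ≤ Real.log M + a n * (-Real.log r) := by linarith
      have h3 : Real.log M ≤ |Real.log M| := le_abs_self _
      nlinarith [mul_le_mul_of_nonneg_left h2 (mul_nonneg hk0.le ha0.le), mul_le_mul_of_nonneg_right h3 (mul_nonneg hk0.le ha0.le)]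
    have hterm1 : |Real.log M| / (k * a n) ≤ δ / 2 := by
      rw [div_le_iff₀ (by positivity)]
      have h4 : 2 * |Real.log M| / (k * δ) ≤ a n := le_trans (le_max_right _ _) han
      have := mul_le_mul_of_nonneg_left h4 (show (0:ℝ) ≤ k * δ / 2 by positivity)
      calc |Real.log M| = k * δ / 2 * (2 * |Real.log M| / (k * δ)) := by field_simp
        _ ≤ k * δ / 2 * a n := this
        _ = δ / 2 * (k * a n) := by ring
    have hfn : Real.log ((n:ℝ)+1) / a n ≤ δ := by linarith
    have hfn0 : 0 ≤ Real.log ((n:ℝ)+1) / a n := by positivity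
    rw [Real.dist_eq, sub_zero, abs_of_nonneg hfn0]
    calc Real.log ((n:ℝ)+1) / a n ≤ δ := hfn
      _ < ε := by rw [hδ]; linarith
  · -- backward
    intro hlim k
    have htend : Tendsto (fun n : ℕ => ((n:ℝ)+1)^k * r ^ (a n)) atTop (𝓝 0) := by
      have hbot : Tendsto (fun n : ℕ => (k:ℝ) * Real.log ((n:ℝ)+1) + Real.log r * a n)
          atTop atBot := by
        have hmul : Tendsto (fun n : ℕ =>
            a n * ((k:ℝ) * (Real.log ((n:ℝ)+1) / a n) + Real.log r)) atTop atBot := by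
          apply Tendsto.atTop_mul_neg (C := Real.log r) hlr htop
          have : Tendsto (fun n : ℕ => (k:ℝ) * (Real.log ((n:ℝ)+1) / a n)) atTop (𝓝 0) := by
            simpa using hlim.const_mul (k:ℝ)
          simpa using this.add tendsto_const_nhds
        apply hmul.congr'
        filter_upwards [htop.eventually_gt_atTop 0] with n ha0
        field_simp
      have := Real.tendsto_exp_atBot.comp hbot
      apply this.congr
      intro n
      simp only [Function.comp_apply]
      rw [Real.exp_add, ← Real.rpow_def_of_pos hr0]
      congr 1
      rw [← Real.log_pow, Real.exp_log (by positivity)]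
    obtain ⟨M, hM⟩ := htend.bddAbove_range
    exact ⟨M, fun n => hM (Set.mem_range_self n)⟩
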